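/- (Social optimality implies equilibrium under strict feasibility, deterministic version.) Under the setting of the previous statement (V_i convex, K_i convex, φ convex differentiable, F = (1/N)φ'), suppose additionally each V_i is continuous and each K_i has nonempty interior (Slater condition), and (x₁*,…,x_N*) minimizes ∑ V_i(x_i) + φ((1/N)∑ x_i) over K₁×⋯×K_N. Then with y* = F(m*) where m* = (1/N)∑ x_i*, each x_i* minimizes x ↦ V_i(x) + ⟨y*, x⟩ over K_i; i.e., the socially optimal solution is a mean field equilibrium. -/

import Mathlib

open scoped RealInnerProductSpace BigOperators

theorem stmt14 {X : Type*} [NormedAddCommGroup X] [InnerProductSpace ℝ X] [CompleteSpace X]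
    {N : ℕ} (hN : 0 < N)
    {V : Fin N → X → ℝ} (hV : ∀ i, ConvexOn ℝ Set.univ (V i))
    (hVcont : ∀ i, Continuous (V i))
    {K : Fin N → Set X} (hKne : ∀ i, (K i).Nonempty) (hKconv : ∀ i, Convex ℝ (K i))
    (hKint : ∀ i, (interior (K i)).Nonempty)
    {φ : X → ℝ} (hφ : ConvexOn ℝ Set.univ φ) {φ' : X → X}
    (hgrad : ∀ z, HasGradientAt φ (φ' z) z)
    {F : X → X} (hFφ : ∀ z, F z = (N : ℝ)⁻¹ • φ' z)
    {xs : Fin N → X} (hxs : ∀ i, xs i ∈ K i)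
    (hsoc : ∀ z : Fin N → X, (∀ i, z i ∈ K i) →
      (∑ i, V i (xs i)) + φ ((N : ℝ)⁻¹ • ∑ i, xs i) ≤
        (∑ i, V i (z i)) + φ ((N : ℝ)⁻¹ • ∑ i, z i)) :
    ∀ i, ∀ x ∈ K i,
      V i (xs i) + ⟪F ((N : ℝ)⁻¹ • ∑ j, xs j), xs i⟫ ≤
        V i x + ⟪F ((N : ℝ)⁻¹ • ∑ j, xs j), x⟫ := by
  intro i x hx
  set m : X := (N : ℝ)⁻¹ • ∑ j, xs j with hm
  set g : X := φ' m with hg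
  set v : X := (N : ℝ)⁻¹ • (x - xs i) with hv
  have key : ∀ t : ℝ, t ∈ Set.Ioc (0:ℝ) 1 →
      V i (xs i) - V i x ≤ (φ (m + t • v) - φ m) / t := by
    intro t ht
    obtain ⟨ht0, ht1⟩ := ht
    set z : Fin N → X := Function.update xs i ((1 - t) • xs i + t • x) with hz
    have hzK : ∀ j, z j ∈ K j := by
      intro j
      rcases eq_or_ne j i with rfl | hji
      · simpa [hz] using hKconv j (hxs j) hx (by linarith) ht0.le (by ring)
      · simpa [hz, Function.update_of_ne hji] using hxs j
    have hsum : ∑ j, z j = (∑ j, xs j) + t • (x - xs i) := by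
      rw [hz, Finset.sum_update_of_mem (Finset.mem_univ i), Finset.sdiff_singleton_eq_erase,
        Finset.sum_erase_eq_sub (Finset.mem_univ i)]
      rw [sub_smul, one_smul, smul_sub]
      abel
    have hmean : (N : ℝ)⁻¹ • ∑ j, z j = m + t • v := by
      rw [hsum, smul_add, hm, hv, smul_smul, smul_smul, mul_comm]
    have hVsum : ∑ j, V j (z j) = (∑ j, V j (xs j)) - V i (xs i)
        + V i ((1 - t) • xs i + t • x) := by
      have h1 : ∑ j, V j (z j)
          = V i (z i) + ∑ j ∈ Finset.univ.erase i, V j (z j) :=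
        (Finset.add_sum_erase _ _ (Finset.mem_univ i)).symm
      have h2 : ∑ j ∈ Finset.univ.erase i, V j (z j)
          = ∑ j ∈ Finset.univ.erase i, V j (xs j) := by
        refine Finset.sum_congr rfl fun j hj => ?_
        rw [hz, Function.update_of_ne (Finset.ne_of_mem_erase hj)]
      have h3 : ∑ j ∈ Finset.univ.erase i, V j (xs j)
          = (∑ j, V j (xs j)) - V i (xs i) :=
        Finset.sum_erase_eq_sub (Finset.mem_univ i)
      rw [h1, h2, h3, hz, Function.update_self]
      ring
    have hconv : V i ((1 - t) • xs i + t • x)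
        ≤ (1 - t) * V i (xs i) + t * V i x :=
      (hV i).2 (Set.mem_univ _) (Set.mem_univ _) (by linarith) ht0.le (by ring)
    have hs := hsoc z hzK
    rw [hmean, hVsum] at hs
    rw [le_div_iff₀ ht0]
    nlinarith [hs, hconv]
  -- derivative of t ↦ φ (m + t • v) at 0
  have hline : HasDerivAt (fun t : ℝ => m + t • v) v 0 := by
    simpa using ((hasDerivAt_id (0 : ℝ)).smul_const v).const_add m
  have hF : HasFDerivAt φ ((InnerProductSpace.toDual ℝ X) g) m :=
    (hgrad m).hasFDerivAt
  have hψ : HasDerivAt (fun t : ℝ => φ (m + t • v)) ⟪g, v⟫ 0 := by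
    have h0 : m + (0 : ℝ) • v = m := by simp
    have := (h0 ▸ hF : HasFDerivAt φ _ (m + (0:ℝ) • v)).comp_hasDerivAt 0 hline
    simp only [InnerProductSpace.toDual_apply_apply] at this; exact this
  have hslope : Filter.Tendsto (slope (fun t : ℝ => φ (m + t • v)) 0)
      (nhdsWithin 0 (Set.Ioi 0)) (nhds ⟪g, v⟫) :=
    (hasDerivAt_iff_tendsto_slope.mp hψ).mono_left
      (nhdsWithin_mono _ fun t ht => ne_of_gt ht)
  have hle : V i (xs i) - V i x ≤ ⟪g, v⟫ := by
    refine ge_of_tendsto hslope ?_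
    filter_upwards [Ioc_mem_nhdsGT_of_mem (Set.mem_Ico.mpr ⟨le_refl 0, zero_lt_one⟩)]
      with t ht
    have := key t ht
    simpa [slope, sub_zero, div_eq_inv_mul] using this
  have hFm : F m = (N : ℝ)⁻¹ • g := hFφ m
  have hinner : ⟪g, v⟫ = ⟪F m, x⟫ - ⟪F m, xs i⟫ := by
    rw [hFm, hv, real_inner_smul_right, real_inner_smul_left,
      real_inner_smul_left, inner_sub_right]
    ring
  rw [hinner] at hle
  linarith
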